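/- Let f, g : [0,∞) → [0,∞) satisfy f(0)=g(0)=0 and f ≤ g pointwise, with f strictly concave (and finite) and g super-additive but not linear. Then there exists no aggregation function A on [0,∞) such that A_* = f and A* = g. -/

import Mathlib

/-- Concave functions on `[0,∞)` vanishing at `0` are subadditive. -/
lemma concave_subadd_aux {f : ℝ → ℝ} (hf : ConcaveOn ℝ (Set.Ici 0) f) (hf0 : f 0 = 0)
    {a b : ℝ} (ha : 0 ≤ a) (hb : 0 ≤ b) : f (a + b) ≤ f a + f b := by
  rcases eq_or_lt_of_le ha with h | ha'
  · simp [← h, hf0]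
  rcases eq_or_lt_of_le hb with h | hb'
  · simp [← h, hf0]
  have hab : 0 < a + b := by linarith
  have hmem0 : (0:ℝ) ∈ Set.Ici (0:ℝ) := Set.mem_Ici.mpr le_rfl
  have hmemab : a + b ∈ Set.Ici (0:ℝ) := Set.mem_Ici.mpr hab.le
  have h1 := hf.2 hmem0 hmemab (show (0:ℝ) ≤ b/(a+b) by positivity)
    (show (0:ℝ) ≤ a/(a+b) by positivity) (show b/(a+b) + a/(a+b) = 1 by field_simp; ring)
  have h2 := hf.2 hmem0 hmemab (show (0:ℝ) ≤ a/(a+b) by positivity)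
    (show (0:ℝ) ≤ b/(a+b) by positivity) (show a/(a+b) + b/(a+b) = 1 by field_simp)
  simp only [smul_eq_mul, mul_zero, zero_add, hf0] at h1 h2
  have e1 : a/(a+b) * (a+b) = a := by field_simp
  have e2 : b/(a+b) * (a+b) = b := by field_simp
  rw [e1] at h1
  rw [e2] at h2
  have h3 : a/(a+b) * f (a+b) + b/(a+b) * f (a+b) = f (a+b) := by
    field_simp
  linarith [h1, h2]

lemma subadd_sum_aux {f : ℝ → ℝ} (hf : ConcaveOn ℝ (Set.Ici 0) f) (hf0 : f 0 = 0)
    {ι : Type*} (S : Finset ι) (d : ι → ℝ) (hd : ∀ i, 0 ≤ d i) :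
    f (∑ i ∈ S, d i) ≤ ∑ i ∈ S, f (d i) := by
  induction S using Finset.cons_induction with
  | empty => simp [hf0]
  | cons a s ha ih =>
    rw [Finset.sum_cons, Finset.sum_cons]
    have h1 : f (d a + ∑ i ∈ s, d i) ≤ f (d a) + f (∑ i ∈ s, d i) :=
      concave_subadd_aux hf hf0 (hd a) (Finset.sum_nonneg fun i _ => hd i)
    linarith

/-- slope antitonicity: for `0 < s ≤ t`, `s * f t ≤ t * f s`. -/
lemma ratio_antitone_aux {f : ℝ → ℝ} (hf : ConcaveOn ℝ (Set.Ici 0) f) (hf0 : f 0 = 0)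
    {s t : ℝ} (hs : 0 < s) (hst : s ≤ t) : s * f t ≤ t * f s := by
  have ht : 0 < t := lt_of_lt_of_le hs hst
  have h1 := hf.2 (Set.mem_Ici.mpr le_rfl : (0:ℝ) ∈ Set.Ici (0:ℝ))
    (Set.mem_Ici.mpr ht.le : t ∈ Set.Ici (0:ℝ))
    (show (0:ℝ) ≤ 1 - s/t by rw [sub_nonneg]; exact div_le_one_of_le₀ hst ht.le)
    (show (0:ℝ) ≤ s/t by positivity) (show 1 - s/t + s/t = 1 by ring)
  simp only [smul_eq_mul, mul_zero, zero_add, hf0] at h1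
  have e : s/t * t = s := by field_simp
  rw [e] at h1
  have : s/t * f t ≤ f s := by linarith
  calc s * f t = t * (s/t * f t) := by field_simp
  _ ≤ t * f s := by nlinarith

lemma exists_subset_sum_aux {k : ℕ} (d : Fin k → ℝ) (x t : ℝ) (hd : ∀ i, 0 ≤ d i)
    (hsum : ∑ i, d i = x) (hx : 0 < x) (ht : 0 < t) (ht3 : t ≤ 1/3)
    (hsmall : ∀ i, d i ≤ (1-t)*x) :
    ∃ S : Finset (Fin k), t*x ≤ ∑ i ∈ S, d i ∧ ∑ i ∈ S, d i ≤ (1-t)*x := by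
  by_cases hbig : ∃ i, t*x < d i
  · obtain ⟨i, hi⟩ := hbig
    exact ⟨{i}, by simpa using hi.le, by simpa using hsmall i⟩
  · push_neg at hbig
    have hne : (Finset.univ.filter
        (fun S : Finset (Fin k) => t*x ≤ ∑ i ∈ S, d i)).Nonempty := by
      refine ⟨Finset.univ, ?_⟩
      simp only [Finset.mem_filter, Finset.mem_univ, true_and, hsum]
      nlinarith
    obtain ⟨S, hS, hmin⟩ := Finset.exists_min_image _ Finset.card hne
    simp only [Finset.mem_filter, Finset.mem_univ, true_and] at hS
    have hSne : S.Nonempty := by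
      rcases S.eq_empty_or_nonempty with h | h
      · exfalso
        rw [h] at hS
        simp at hS
        nlinarith
      · exact h
    obtain ⟨j, hj⟩ := hSne
    have herase : ∑ i ∈ S.erase j, d i < t*x := by
      by_contra h
      push_neg at h
      have h1 := hmin (S.erase j) (by simp only [Finset.mem_filter, Finset.mem_univ, true_and]; exact h)
      have h2 := Finset.card_erase_lt_of_mem hj
      omega
    have heq : ∑ i ∈ S, d i = d j + ∑ i ∈ S.erase j, d i := (Finset.add_sum_erase _ _ hj).symm
    refine ⟨S, hS, ?_⟩
    have := hbig j
    nlinarith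

set_option maxHeartbeats 1600000 in
/-- If `f, g : [0,∞) → [0,∞)` satisfy `f 0 = g 0 = 0`, `f ≤ g` pointwise,
`f` strictly concave (and finite) and `g` super-additive but not linear, then there is no
aggregation function `A` on `[0,∞)` with `A_* = f` and `A* = g`. -/
theorem no_aggregation_with_prescribed_transforms_concave
    (f g : ℝ → ℝ)
    (hfnonneg : ∀ x, 0 ≤ x → 0 ≤ f x) (hgnonneg : ∀ x, 0 ≤ x → 0 ≤ g x)
    (hf0 : f 0 = 0) (hg0 : g 0 = 0) (hfg : ∀ x, 0 ≤ x → f x ≤ g x)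
    (hfconc : StrictConcaveOn ℝ (Set.Ici 0) f)
    (hgsuper : ∀ x y : ℝ, 0 ≤ x → 0 ≤ y → g x + g y ≤ g (x + y))
    (hgnotlin : ¬ ∃ c : ℝ, ∀ x, 0 ≤ x → g x = c * x) :
    ¬ ∃ A : ℝ → ℝ, (∀ x, 0 ≤ x → 0 ≤ A x) ∧ A 0 = 0 ∧ MonotoneOn A (Set.Ici 0) ∧
      (∀ x, 0 ≤ x →
        IsGLB {s : ℝ | ∃ (k : ℕ) (d : Fin k → ℝ), 1 ≤ k ∧ (∀ i, 0 ≤ d i) ∧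
          x ≤ (∑ i, d i) ∧ s = ∑ i, A (d i)} (f x)) ∧
      (∀ x, 0 ≤ x →
        IsLUB {s : ℝ | ∃ (k : ℕ) (c : Fin k → ℝ), 1 ≤ k ∧ (∀ j, 0 ≤ c j) ∧
          (∑ j, c j) ≤ x ∧ s = ∑ j, A (c j)} (g x)) := by
  rintro ⟨A, hApos, hA0, hAmono, hglb, hlub⟩
  have hconc : ConcaveOn ℝ (Set.Ici 0) f := hfconc.concaveOn
  -- f ≤ A on [0,∞)
  have hfA : ∀ y, 0 ≤ y → f y ≤ A y := by
    intro y hy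
    refine (hglb y hy).1 ?_
    exact ⟨1, fun _ => y, le_refl 1, fun _ => hy, by simp, by simp⟩
  -- n copies of y bound in g's set
  have hcopies : ∀ (n : ℕ) (y x : ℝ), 1 ≤ n → 0 ≤ y → 0 ≤ x → (n:ℝ) * y ≤ x →
      (n:ℝ) * A y ≤ g x := by
    intro n y x hn hy hx hnyx
    refine (hlub x hx).1 ?_
    refine ⟨n, fun _ => y, hn, fun _ => hy, by simpa using hnyx, by simp [mul_comm]⟩
  -- KEY: for any t ∈ (0,1/3] and x > 0 : A((1-t)x) ≤ f x
  have key : ∀ t x : ℝ, 0 < t → t ≤ 1/3 → 0 < x → A ((1-t)*x) ≤ f x := by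
    intro t x ht ht3 hx
    have htx : 0 < t*x := by positivity
    have h1tx : 0 < (1-t)*x := by nlinarith
    -- strict concavity gap
    have hgap : f x < f (t*x) + f ((1-t)*x) := by
      have hne : (0:ℝ) ≠ x := ne_of_lt hx
      have h1 := hfconc.2 (Set.mem_Ici.mpr le_rfl : (0:ℝ) ∈ Set.Ici (0:ℝ))
        (Set.mem_Ici.mpr hx.le : x ∈ Set.Ici (0:ℝ)) hne
        (show (0:ℝ) < 1-t by linarith) ht (show 1-t+t = 1 by ring)
      have h2 := hfconc.2 (Set.mem_Ici.mpr le_rfl : (0:ℝ) ∈ Set.Ici (0:ℝ))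
        (Set.mem_Ici.mpr hx.le : x ∈ Set.Ici (0:ℝ)) hne
        ht (show (0:ℝ) < 1-t by linarith) (show t+(1-t) = 1 by ring)
      simp only [smul_eq_mul, mul_zero, zero_add, hf0] at h1 h2
      linarith
    have hlbmem : min (f (t*x) + f ((1-t)*x)) (A ((1-t)*x)) ∈
        lowerBounds {s : ℝ | ∃ (k : ℕ) (d : Fin k → ℝ), 1 ≤ k ∧ (∀ i, 0 ≤ d i) ∧
          x ≤ (∑ i, d i) ∧ s = ∑ i, A (d i)} := by
      rintro s ⟨k, d, hk, hd, hxd, rfl⟩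
      have hσpos : 0 < ∑ i, d i := lt_of_lt_of_le hx hxd
      set lam := x / (∑ i, d i) with hlam
      have hlam0 : 0 < lam := div_pos hx hσpos
      have hlam1 : lam ≤ 1 := div_le_one_of_le₀ hxd hσpos.le
      set d' := fun i => lam * d i with hd'def
      have hd' : ∀ i, 0 ≤ d' i := fun i => mul_nonneg hlam0.le (hd i)
      have hd'le : ∀ i, d' i ≤ d i := by
        intro i
        have := hd i
        simp only [hd'def]
        nlinarith
      have hsum' : ∑ i, d' i = x := by
        simp only [hd'def, ← Finset.mul_sum, hlam]
        field_simp
      have hsumA : ∑ i, A (d' i) ≤ ∑ i, A (d i) :=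
        Finset.sum_le_sum fun i _ => hAmono (hd' i) (hd i) (hd'le i)
      by_cases hbig : ∃ i, (1-t)*x < d' i
      · obtain ⟨i, hi⟩ := hbig
        have h1 : A ((1-t)*x) ≤ A (d' i) := hAmono h1tx.le (hd' i) hi.le
        have h2 : A (d' i) ≤ ∑ j, A (d' j) :=
          Finset.single_le_sum (fun j _ => hApos _ (hd' j)) (Finset.mem_univ i)
        calc min (f (t*x) + f ((1-t)*x)) (A ((1-t)*x)) ≤ A ((1-t)*x) := min_le_right _ _
        _ ≤ ∑ j, A (d' j) := le_trans h1 h2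
        _ ≤ ∑ i, A (d i) := hsumA
      · push_neg at hbig
        obtain ⟨S, hS1, hS2⟩ := exists_subset_sum_aux d' x t hd' hsum' hx ht ht3 hbig
        set s := ∑ i ∈ S, d' i with hsdef
        have hcompl : ∑ i ∈ Sᶜ, d' i = x - s := by
          have := Finset.sum_add_sum_compl S d'
          rw [hsum'] at this
          linarith
        -- concavity on the interval [t*x, (1-t)*x]
        have hfs : f (t*x) + f ((1-t)*x) ≤ f s + f (x - s) := by
          set lam' := ((1-t)*x - s) / ((1-t)*x - t*x) with hlam'
          have hden : 0 < (1-t)*x - t*x := by nlinarith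
          have hl0 : 0 ≤ lam' := div_nonneg (by linarith) hden.le
          have hl1 : lam' ≤ 1 := by
            rw [div_le_one hden]; linarith
          have e1 : lam' * (t*x) + (1-lam') * ((1-t)*x) = s := by
            have key : lam' * ((1-t)*x - t*x) = (1-t)*x - s := div_mul_cancel₀ _ hden.ne'
            linear_combination (-1 : ℝ) * key
          have e2 : (1-lam') * (t*x) + lam' * ((1-t)*x) = x - s := by
            have key : lam' * ((1-t)*x - t*x) = (1-t)*x - s := div_mul_cancel₀ _ hden.ne'
            linear_combination key
          have c1 := hconc.2 (Set.mem_Ici.mpr htx.le : t*x ∈ Set.Ici (0:ℝ))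
            (Set.mem_Ici.mpr h1tx.le : (1-t)*x ∈ Set.Ici (0:ℝ))
            hl0 (show (0:ℝ) ≤ 1-lam' by linarith) (show lam' + (1-lam') = 1 by ring)
          have c2 := hconc.2 (Set.mem_Ici.mpr htx.le : t*x ∈ Set.Ici (0:ℝ))
            (Set.mem_Ici.mpr h1tx.le : (1-t)*x ∈ Set.Ici (0:ℝ))
            (show (0:ℝ) ≤ 1-lam' by linarith) hl0 (show (1-lam') + lam' = 1 by ring)
          simp only [smul_eq_mul] at c1 c2
          rw [e1] at c1
          rw [e2] at c2
          linarith
        have h1 : f s ≤ ∑ i ∈ S, f (d' i) := by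
          have := subadd_sum_aux hconc hf0 S d' hd'
          rwa [← hsdef] at this
        have h2 : f (x - s) ≤ ∑ i ∈ Sᶜ, f (d' i) := by
          rw [← hcompl]
          exact subadd_sum_aux hconc hf0 Sᶜ d' hd'
        have h3 : ∑ i, f (d' i) ≤ ∑ i, A (d' i) :=
          Finset.sum_le_sum fun i _ => hfA _ (hd' i)
        have hsplit : ∑ i ∈ S, f (d' i) + ∑ i ∈ Sᶜ, f (d' i) = ∑ i, f (d' i) :=
          Finset.sum_add_sum_compl S _
        calc min (f (t*x) + f ((1-t)*x)) (A ((1-t)*x)) ≤ f (t*x) + f ((1-t)*x) :=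
            min_le_left _ _
        _ ≤ f s + f (x - s) := hfs
        _ ≤ ∑ i ∈ S, f (d' i) + ∑ i ∈ Sᶜ, f (d' i) := by linarith
        _ = ∑ i, f (d' i) := hsplit
        _ ≤ ∑ i, A (d' i) := h3
        _ ≤ ∑ i, A (d i) := hsumA
    have hle := (hglb x hx.le).2 hlbmem
    rcases min_cases (f (t*x) + f ((1-t)*x)) (A ((1-t)*x)) with ⟨h, _⟩ | ⟨h, _⟩
    · linarith [hle, hgap, h]
    · linarith [hle, h]
  -- the slope constant
  set Sset := (fun t => f t / t) '' Set.Ioc (0:ℝ) 1 with hSset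
  have hSne : Sset.Nonempty := ⟨f 1 / 1, ⟨1, ⟨zero_lt_one, le_refl 1⟩, rfl⟩⟩
  have hSbdd : BddAbove Sset := by
    refine ⟨2 * g 1, ?_⟩
    rintro r ⟨u, ⟨hu0, hu1⟩, rfl⟩
    set n : ℕ := ⌊1/u⌋₊ with hn
    have h1u : 1 ≤ 1/u := by rw [le_div_iff₀ hu0]; linarith
    have hn1 : 1 ≤ n := Nat.le_floor (by exact_mod_cast h1u)
    have hnu : (n:ℝ) * u ≤ 1 := by
      have := Nat.floor_le (by positivity : (0:ℝ) ≤ 1/u)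
      rw [← hn] at this
      calc (n:ℝ) * u ≤ (1/u) * u := by nlinarith
      _ = 1 := by field_simp
    have hnu2 : 1/2 ≤ (n:ℝ) * u := by
      have hfl : 1/u < (n:ℝ) + 1 := Nat.lt_floor_add_one (1/u)
      have hnn : (1:ℝ) ≤ (n:ℝ) := by exact_mod_cast hn1
      rcases le_or_gt u (1/2) with h | h
      · -- n*u > 1 - u ≥ 1/2
        have : 1 < ((n:ℝ)+1) * u := by
          rw [div_lt_iff₀ hu0] at hfl
          linarith
        nlinarith
      · nlinarith
    have hAu := hcopies n u 1 hn1 hu0.le zero_le_one hnu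
    have hfu := hfA u hu0.le
    have hfnn := hfnonneg u hu0.le
    rw [div_le_iff₀ hu0]
    nlinarith
  set c := sSup Sset with hc
  have hfc1 : ∀ u : ℝ, 0 < u → u ≤ 1 → f u ≤ c * u := by
    intro u hu0 hu1
    have : f u / u ≤ c := le_csSup hSbdd ⟨u, ⟨hu0, hu1⟩, rfl⟩
    rw [div_le_iff₀ hu0] at this
    linarith [this]
  have hc0 : 0 ≤ c := by
    have h1 : f 1 / 1 ≤ c := le_csSup hSbdd ⟨1, ⟨zero_lt_one, le_refl 1⟩, rfl⟩
    have := hfnonneg 1 zero_le_one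
    simp at h1
    linarith
  have hfc : ∀ u : ℝ, 0 < u → f u ≤ c * u := by
    intro u hu0
    rcases le_or_gt u 1 with h | h
    · exact hfc1 u hu0 h
    · have hr := ratio_antitone_aux hconc hf0 zero_lt_one h.le
      have h1 : f 1 ≤ c * 1 := hfc1 1 zero_lt_one (le_refl 1)
      nlinarith
  -- A y ≤ c * y
  have hAc : ∀ y, 0 ≤ y → A y ≤ c * y := by
    intro y hy
    rcases eq_or_lt_of_le hy with h | hy'
    · simp [← h, hA0]
    have hbound : ∀ t : ℝ, 0 < t → t ≤ 1/3 → A y ≤ c * (y / (1-t)) := by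
      intro t ht ht3
      have h1t : 0 < 1 - t := by linarith
      have hxpos : 0 < y / (1-t) := by positivity
      have he : (1-t) * (y / (1-t)) = y := by field_simp
      have := key t (y/(1-t)) ht ht3 hxpos
      rw [he] at this
      exact le_trans this (hfc _ hxpos)
    by_contra hcon
    push_neg at hcon
    set ε := A y - c * y with hε
    have hεpos : 0 < ε := by linarith
    have hcy : 0 ≤ c * y := mul_nonneg hc0 hy
    set t := min (1/3 : ℝ) (ε / (2*(c*y+ε))) with htdef
    have ht0 : 0 < t := lt_min (by norm_num) (by positivity)
    have ht3 : t ≤ 1/3 := min_le_left _ _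
    have htε : t ≤ ε / (2*(c*y+ε)) := min_le_right _ _
    have h1t : 0 < 1 - t := by linarith
    have hb := hbound t ht0 ht3
    have hkey : c * (y / (1-t)) < c * y + ε := by
      have h2 : t * (2*(c*y+ε)) ≤ ε := (le_div_iff₀ (by positivity)).mp htε
      have he : c * (y/(1-t)) = (c*y)/(1-t) := by ring
      rw [he, div_lt_iff₀ h1t]
      nlinarith
    linarith
  -- g x ≤ c * x
  have hgle : ∀ x, 0 ≤ x → g x ≤ c * x := by
    intro x hx
    refine (hlub x hx).2 ?_
    rintro s ⟨k, cc, hk, hcc, hsum, rfl⟩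
    calc ∑ j, A (cc j) ≤ ∑ j, c * cc j := Finset.sum_le_sum fun j _ => hAc _ (hcc j)
    _ = c * ∑ j, cc j := by rw [Finset.mul_sum]
    _ ≤ c * x := by nlinarith [Finset.sum_nonneg fun j (_ : j ∈ Finset.univ) => hcc j]
  -- c * x ≤ g x
  have hgge : ∀ x, 0 ≤ x → c * x ≤ g x := by
    intro x hx
    rcases eq_or_lt_of_le hx with h | hx'
    · simp [← h, hg0]
    by_contra hcon
    push_neg at hcon
    have hdiv : g x / x < c := by rw [div_lt_iff₀ hx']; linarith
    obtain ⟨r, ⟨u, ⟨hu0, hu1⟩, rfl⟩, hr⟩ := exists_lt_of_lt_csSup hSne hdiv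
    obtain ⟨m, hm⟩ := exists_nat_ge (x / u)
    set n := max m 1 with hndef
    have hn1 : 1 ≤ n := le_max_right _ _
    have hnpos : (0:ℝ) < n := by exact_mod_cast hn1
    have hnx : x / u ≤ (n:ℝ) := le_trans hm (by exact_mod_cast le_max_left m 1)
    set y := x / n with hy
    have hy0 : 0 < y := by positivity
    have hyu : y ≤ u := by
      rw [hy, div_le_iff₀ hnpos]
      rw [div_le_iff₀ hu0] at hnx
      linarith
    have hny : (n:ℝ) * y = x := by rw [hy]; field_simp
    have hA := hcopies n y x hn1 hy0.le hx (le_of_eq hny)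
    have hfy := hfA y hy0.le
    -- slope: f y / y ≥ f u / u > g x / x
    have hrat := ratio_antitone_aux hconc hf0 hy0 hyu
    -- y * f u ≤ u * f y
    have h1 : g x / x < f u / u := hr
    rw [div_lt_div_iff₀ hx' hu0] at h1
    -- g x * u < f u * x
    -- n * f y ≤ n * A y ≤ g x ; want contradiction
    have h2 : (n:ℝ) * f y ≤ g x :=
      le_trans (mul_le_mul_of_nonneg_left hfy hnpos.le) hA
    have h3 : (n:ℝ) * (y * f u) ≤ (n:ℝ) * (u * f y) :=
      mul_le_mul_of_nonneg_left hrat hnpos.le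
    have h4 : x * f u ≤ u * g x := by
      calc x * f u = ((n:ℝ)*y) * f u := by rw [hny]
      _ = (n:ℝ) * (y * f u) := by ring
      _ ≤ (n:ℝ) * (u * f y) := h3
      _ = u * ((n:ℝ) * f y) := by ring
      _ ≤ u * g x := mul_le_mul_of_nonneg_left h2 hu0.le
    nlinarith [h1, h4]
  exact hgnotlin ⟨c, fun x hx => le_antisymm (hgle x hx) (hgge x hx)⟩
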